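/- For every element x of Q: x^{(ab)^k} = x^{c̄ d̄} = x^{(ef)^k}, where x^{(ab)^k} denotes k-fold application of the word ab (i.e., of the permutation x ↦ (x ▷ a) ▷ b) and similarly for (ef)^k. -/
import Mathlib


/-- A quandle as in the paper: a set with operations `▷` and `▷⁻¹` satisfying
axioms A1, A2, A3. -/
class PaperQuandle (Q : Type*) where
  rhd : Q → Q → Q
  rhdInv : Q → Q → Q
  fix : ∀ x : Q, rhd x x = x
  inv_rhd : ∀ x y : Q, rhdInv (rhd x y) y = x
  rhd_inv : ∀ x y : Q, rhd (rhdInv x y) y = x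
  self_distrib : ∀ x y z : Q, rhd (rhd x y) z = rhd (rhd x z) (rhd y z)

infixl:65 " ▷ " => PaperQuandle.rhd
infixl:65 " ▷⁻¹ " => PaperQuandle.rhdInv

/-- The point symmetry at `u`, as a permutation of `Q`: `x ↦ x ▷ u`,
with inverse `x ↦ x ▷⁻¹ u`. -/
def ptSym {Q : Type*} [PaperQuandle Q] (u : Q) : Equiv.Perm Q where
  toFun x := x ▷ u
  invFun x := x ▷⁻¹ u
  left_inv x := PaperQuandle.inv_rhd x u
  right_inv x := PaperQuandle.rhd_inv x u

theorem stmt_6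
    {Q : Type*} [PaperQuandle Q] (k : ℤ) (m n : ℕ) (a b c d e f : Q)
    (hk : 1 ≤ k) (hm : 0 < m) (hn : 0 < n)
    (rel_a : ∀ x : Q, x ▷ a ▷ a = x)
    (rel_b : ∀ x : Q, x ▷ b ▷ b = x)
    (rel_e : ∀ x : Q, x ▷ e ▷ e = x)
    (rel_f : ∀ x : Q, x ▷ f ▷ f = x)
    (rel_c : ∀ x : Q, (ptSym c ^ m) x = x)
    (rel_d : ∀ x : Q, (ptSym d ^ n) x = x)
    (rel_dea : ∀ x : Q, x ▷ d ▷ e ▷ a = x)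
    (rel_bdf : ∀ x : Q, x ▷ b ▷ d ▷ f = x)
    (rel_cke : ∀ x : Q, (((ptSym b * ptSym a) ^ k) (x ▷ c)) ▷ a ▷ e = x)
    (rel_fca : ∀ x : Q, (((ptSym b * ptSym a) ^ (k - 1)) (x ▷ f ▷ c)) ▷ a = x) :
    ∀ x : Q, ((ptSym b * ptSym a) ^ k) x = x ▷⁻¹ c ▷⁻¹ d ∧
      ((ptSym b * ptSym a) ^ k) x = ((ptSym f * ptSym e) ^ k) x := by
  have fact1 : ∀ y : Q, y ▷ e ▷ a = y ▷⁻¹ d := by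
    intro y
    have h := rel_dea (y ▷⁻¹ d)
    rwa [PaperQuandle.rhd_inv] at h
  have fact2 : ∀ y : Q, y ▷ f = y ▷⁻¹ d ▷ b := by
    intro y
    have h := rel_bdf (y ▷⁻¹ d ▷ b)
    rwa [rel_b, PaperQuandle.rhd_inv] at h
  have fact3 : ∀ y : Q, ((ptSym b * ptSym a) ^ k) y = y ▷⁻¹ c ▷⁻¹ d := by
    intro y
    have h := rel_cke (y ▷⁻¹ c)
    rw [PaperQuandle.rhd_inv] at h
    have h2 : ((ptSym b * ptSym a) ^ k) y = y ▷⁻¹ c ▷ e ▷ a := by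
      rw [← h, rel_e, rel_a]
    rwa [fact1] at h2
  intro x
  refine ⟨fact3 x, ?_⟩
  have hperm : ptSym f * ptSym e = ptSym b * ptSym a := by
    ext z
    show (z ▷ e) ▷ f = (z ▷ a) ▷ b
    rw [fact2, ← fact1, rel_e]
  rw [hperm]
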